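/- Let L*, Δ ∈ ℝ^{n×n} and let k ∈ {1,…,n}. Then there exists a decomposition Δ = Δ_A + Δ_B such that (i) rank(Δ_A) ≤ 2k and Δ_Aᵀ Δ_B = Δ_Bᵀ Δ_A = 0, and (ii) ‖L* + Δ‖_* ≥ ‖L*‖_* + ‖Δ_B‖_* − ‖Δ_A‖_* − 2·Σ_{j=k+1}^{n} σ_j(L*). -/

import Mathlib

open Matrix BigOperators Finset

noncomputable section

namespace CitNet

variable {n : ℕ}

/-- Frobenius norm of a real matrix. -/
def frob (A : Matrix (Fin n) (Fin n) ℝ) : ℝ :=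
  Real.sqrt (∑ i, ∑ j, (A i j) ^ 2)

/-- Elementwise ℓ1 norm. -/
def l1 (A : Matrix (Fin n) (Fin n) ℝ) : ℝ :=
  ∑ i, ∑ j, |A i j|

/-- Elementwise sup norm. -/
def supNorm (A : Matrix (Fin n) (Fin n) ℝ) : ℝ :=
  ⨆ i, ⨆ j, |A i j|

/-- Trace inner product. -/
def tinner (A B : Matrix (Fin n) (Fin n) ℝ) : ℝ :=
  Matrix.trace (Aᵀ * B)

/-- Nuclear norm: trace of the PSD square root of AᴴA. -/
def nuclearNorm (A : Matrix (Fin n) (Fin n) ℝ) : ℝ :=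
  (((Matrix.posSemidef_conjTranspose_mul_self A).1.eigenvectorUnitary : Matrix (Fin n) (Fin n) ℝ) *
    diagonal (Real.sqrt ∘ (Matrix.posSemidef_conjTranspose_mul_self A).1.eigenvalues) *
    (star (Matrix.posSemidef_conjTranspose_mul_self A).1.eigenvectorUnitary :
      Matrix (Fin n) (Fin n) ℝ)).trace

/-- Singular values in decreasing order: `svDesc A j` is σ_{j+1}(A). -/
def svDesc (A : Matrix (Fin n) (Fin n) ℝ) : Fin n → ℝ := fun j =>
  Real.sqrt ((Matrix.isHermitian_iff_isSymm.mpr (Matrix.isSymm_transpose_mul_self A)).eigenvalues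
    (Tuple.sort (Matrix.isHermitian_iff_isSymm.mpr (Matrix.isSymm_transpose_mul_self A)).eigenvalues j.rev))

/-- Operator norm: largest singular value. -/
def opNorm (A : Matrix (Fin n) (Fin n) ℝ) : ℝ :=
  ⨆ j, svDesc A j

/-- The all-ones matrix 𝟙𝟙ᵀ. -/
def onesMat : Matrix (Fin n) (Fin n) ℝ :=
  Matrix.of fun _ _ => (1 : ℝ)

/-- The centering matrix J = I − (1/n)𝟙𝟙ᵀ. -/
def Jmat (n : ℕ) : Matrix (Fin n) (Fin n) ℝ :=
  1 - (n : ℝ)⁻¹ • onesMat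

/-- Restriction of a matrix to an index set. -/
def restrict (A : Matrix (Fin n) (Fin n) ℝ) (Ω : Finset (Fin n × Fin n)) :
    Matrix (Fin n) (Fin n) ℝ :=
  Matrix.of fun i j => if (i, j) ∈ Ω then A i j else 0

/-- The logistic (sigmoid) matrix P(Θ). -/
def logis (Θ : Matrix (Fin n) (Fin n) ℝ) : Matrix (Fin n) (Fin n) ℝ :=
  Matrix.of fun i j => Real.exp (Θ i j) / (1 + Real.exp (Θ i j))

/-- Negative log-likelihood function h. -/
def hfun (X Θ : Matrix (Fin n) (Fin n) ℝ) : ℝ :=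
  -(1 / (n : ℝ)) * ∑ i, ∑ j, (X i j * Θ i j - Real.log (1 + Real.exp (Θ i j)))

private lemma conjT (A : Matrix (Fin n) (Fin n) ℝ) : Aᴴ = Aᵀ := by
  ext i j; simp [conjTranspose_apply]

noncomputable def sV (A : Matrix (Fin n) (Fin n) ℝ) : Matrix (Fin n) (Fin n) ℝ :=
  (Matrix.isHermitian_conjTranspose_mul_self A).eigenvectorUnitary

noncomputable def sL (A : Matrix (Fin n) (Fin n) ℝ) : Fin n → ℝ :=
  (Matrix.isHermitian_conjTranspose_mul_self A).eigenvalues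

lemma sV_orth (A : Matrix (Fin n) (Fin n) ℝ) : (sV A)ᴴ * sV A = 1 := by
  simpa [sV, Matrix.star_eq_conjTranspose] using
    (Unitary.coe_star_mul_self ((Matrix.isHermitian_conjTranspose_mul_self A).eigenvectorUnitary))

lemma sV_orth2 (A : Matrix (Fin n) (Fin n) ℝ) : sV A * (sV A)ᴴ = 1 := by
  simpa [sV, Matrix.star_eq_conjTranspose] using
    (Unitary.coe_mul_star_self ((Matrix.isHermitian_conjTranspose_mul_self A).eigenvectorUnitary))

lemma sV_spec (A : Matrix (Fin n) (Fin n) ℝ) :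
    Aᴴ * A = sV A * diagonal (sL A) * (sV A)ᴴ := by
  have h := (Matrix.isHermitian_conjTranspose_mul_self A).spectral_theorem
  simpa [sV, sL, Matrix.star_eq_conjTranspose, RCLike.ofReal_real_eq_id] using h

lemma sL_nonneg (A : Matrix (Fin n) (Fin n) ℝ) (i : Fin n) : 0 ≤ sL A i :=
  (Matrix.posSemidef_conjTranspose_mul_self A).eigenvalues_nonneg i

/-- sandwich product -/
lemma sandwich_mul (V : Matrix (Fin n) (Fin n) ℝ) (hV : Vᴴ * V = 1) (a b : Fin n → ℝ) :
    (V * diagonal a * Vᴴ) * (V * diagonal b * Vᴴ) = V * diagonal (fun i => a i * b i) * Vᴴ := by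
  have : diagonal a * (Vᴴ * V) * diagonal b = diagonal fun i => a i * b i := by
    rw [hV, mul_one, diagonal_mul_diagonal]
  calc (V * diagonal a * Vᴴ) * (V * diagonal b * Vᴴ)
      = V * (diagonal a * (Vᴴ * V) * diagonal b) * Vᴴ := by
        simp only [Matrix.mul_assoc]
    _ = V * diagonal (fun i => a i * b i) * Vᴴ := by rw [this]

lemma sandwich_trace (V : Matrix (Fin n) (Fin n) ℝ) (hV : Vᴴ * V = 1) (a : Fin n → ℝ) :
    (V * diagonal a * Vᴴ).trace = ∑ i, a i := by
  rw [Matrix.trace_mul_cycle, hV, Matrix.one_mul, Matrix.trace_diagonal]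


lemma sandwich_conjT (V : Matrix (Fin n) (Fin n) ℝ) (a : Fin n → ℝ) :
    (V * diagonal a * Vᴴ)ᴴ = V * diagonal a * Vᴴ := by
  rw [conjTranspose_mul, conjTranspose_mul, conjTranspose_conjTranspose]
  have : (diagonal a)ᴴ = diagonal a := by
    rw [conjT, diagonal_transpose]
  rw [this, Matrix.mul_assoc]

lemma diagonal_congr {f g : Fin n → ℝ} (h : ∀ i, f i = g i) : diagonal f = diagonal g :=
  congrArg diagonal (funext h)

lemma nuclearNorm_eq (A : Matrix (Fin n) (Fin n) ℝ) :
    nuclearNorm A = ∑ i, Real.sqrt (sL A i) := by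
  unfold nuclearNorm
  have h : (((Matrix.posSemidef_conjTranspose_mul_self A).1.eigenvectorUnitary : Matrix (Fin n) (Fin n) ℝ) *
      diagonal (Real.sqrt ∘ (Matrix.posSemidef_conjTranspose_mul_self A).1.eigenvalues) *
      (star (Matrix.posSemidef_conjTranspose_mul_self A).1.eigenvectorUnitary :
        Matrix (Fin n) (Fin n) ℝ))
      = sV A * diagonal (fun i => Real.sqrt (sL A i)) * (sV A)ᴴ := by
    rfl
  rw [h]
  exact sandwich_trace (sV A) (sV_orth A) _


def gi (lam : Fin n → ℝ) : Fin n → ℝ := fun i => if lam i = 0 then 0 else (Real.sqrt (lam i))⁻¹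
def ei (lam : Fin n → ℝ) : Fin n → ℝ := fun i => if lam i = 0 then 0 else (lam i)⁻¹
def indf (lam : Fin n → ℝ) : Fin n → ℝ := fun i => if lam i = 0 then 0 else 1

noncomputable def sT (A : Matrix (Fin n) (Fin n) ℝ) : Matrix (Fin n) (Fin n) ℝ :=
  sV A * diagonal (gi (sL A)) * (sV A)ᴴ
noncomputable def dualW (A : Matrix (Fin n) (Fin n) ℝ) : Matrix (Fin n) (Fin n) ℝ := A * sT A
noncomputable def rowP (A : Matrix (Fin n) (Fin n) ℝ) : Matrix (Fin n) (Fin n) ℝ :=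
  sV A * diagonal (indf (sL A)) * (sV A)ᴴ

lemma sqrt_pos_of_ne (A : Matrix (Fin n) (Fin n) ℝ) {i : Fin n} (h : sL A i ≠ 0) :
    Real.sqrt (sL A i) ≠ 0 := by
  have := sL_nonneg A i
  positivity

lemma gi_mul_lam (A : Matrix (Fin n) (Fin n) ℝ) (i : Fin n) :
    gi (sL A) i * sL A i = Real.sqrt (sL A i) := by
  unfold gi
  by_cases h : sL A i = 0
  · simp [h]
  · rw [if_neg h, inv_mul_eq_iff_eq_mul₀ (sqrt_pos_of_ne A h),
      Real.mul_self_sqrt (sL_nonneg A i)]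

lemma gi_lam_gi (A : Matrix (Fin n) (Fin n) ℝ) (i : Fin n) :
    gi (sL A) i * sL A i * gi (sL A) i = indf (sL A) i := by
  rw [gi_mul_lam]
  unfold gi indf
  by_cases h : sL A i = 0
  · simp [h]
  · rw [if_neg h, if_neg h, mul_inv_cancel₀ (sqrt_pos_of_ne A h)]

lemma lam_mul_ei (A : Matrix (Fin n) (Fin n) ℝ) (i : Fin n) :
    sL A i * ei (sL A) i = indf (sL A) i := by
  unfold ei indf
  by_cases h : sL A i = 0
  · simp [h]
  · rw [if_neg h, if_neg h, mul_inv_cancel₀ h]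

lemma indf_mul_indf (A : Matrix (Fin n) (Fin n) ℝ) (i : Fin n) :
    indf (sL A) i * indf (sL A) i = indf (sL A) i := by
  unfold indf; by_cases h : sL A i = 0 <;> simp [h]

lemma indf_mul_lam (A : Matrix (Fin n) (Fin n) ℝ) (i : Fin n) :
    indf (sL A) i * sL A i = sL A i := by
  unfold indf; by_cases h : sL A i = 0 <;> simp [h]

lemma sT_conjT (A : Matrix (Fin n) (Fin n) ℝ) : (sT A)ᴴ = sT A := sandwich_conjT _ _

lemma rowP_conjT (A : Matrix (Fin n) (Fin n) ℝ) : (rowP A)ᴴ = rowP A := sandwich_conjT _ _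

lemma rowP_idem (A : Matrix (Fin n) (Fin n) ℝ) : rowP A * rowP A = rowP A := by
  unfold rowP
  rw [sandwich_mul _ (sV_orth A)]
  rw [diagonal_congr (fun i => indf_mul_indf A i)]

/-- trace of dual witness against A equals the nuclear norm -/
lemma dualW_trace (A : Matrix (Fin n) (Fin n) ℝ) :
    ((dualW A)ᴴ * A).trace = ∑ i, Real.sqrt (sL A i) := by
  unfold dualW
  rw [conjTranspose_mul, sT_conjT, Matrix.mul_assoc, Matrix.trace_mul_comm,
    Matrix.mul_assoc, ← Matrix.mul_assoc, sV_spec A]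
  unfold sT
  rw [sandwich_mul _ (sV_orth A), sandwich_trace _ (sV_orth A)]
  exact Finset.sum_congr rfl fun i _ => by rw [mul_comm]; exact gi_mul_lam A i

/-- BᴴB of the dual witness is the row-space projection -/
lemma dualW_sq (A : Matrix (Fin n) (Fin n) ℝ) : (dualW A)ᴴ * dualW A = rowP A := by
  unfold dualW
  rw [conjTranspose_mul, sT_conjT, Matrix.mul_assoc, ← Matrix.mul_assoc Aᴴ A (sT A),
    sV_spec A]
  unfold sT rowP
  rw [← Matrix.mul_assoc, sandwich_mul _ (sV_orth A), sandwich_mul _ (sV_orth A)]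
  rw [diagonal_congr (fun i => show gi (sL A) i * sL A i * gi (sL A) i = indf (sL A) i
      from gi_lam_gi A i)]

lemma rowP_fix (A : Matrix (Fin n) (Fin n) ℝ) : Aᴴ * A * rowP A = Aᴴ * A := by
  rw [sV_spec A]
  unfold rowP
  rw [sandwich_mul _ (sV_orth A)]
  rw [diagonal_congr (fun i => show sL A i * indf (sL A) i = sL A i
      from by rw [mul_comm]; exact indf_mul_lam A i)]

lemma rowP_fix' (A : Matrix (Fin n) (Fin n) ℝ) : rowP A * (Aᴴ * A) = Aᴴ * A := by
  have h := congrArg conjTranspose (rowP_fix A)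
  simp only [conjTranspose_mul, conjTranspose_conjTranspose, rowP_conjT,
    Matrix.mul_assoc] at h
  exact h

/-- key: multiplication kills the row projection -/
lemma mul_rowP_zero {A M : Matrix (Fin n) (Fin n) ℝ} (h : M * (Aᴴ * A) = 0) :
    M * rowP A = 0 := by
  have hre : rowP A = (Aᴴ * A) * (sV A * diagonal (ei (sL A)) * (sV A)ᴴ) := by
    rw [sV_spec A, sandwich_mul _ (sV_orth A)]
    unfold rowP
    rw [diagonal_congr (fun i => (lam_mul_ei A i).symm)]
  rw [hre, ← Matrix.mul_assoc, h, Matrix.zero_mul]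

lemma rowP_mul_zero {A M : Matrix (Fin n) (Fin n) ℝ} (h : (Aᴴ * A) * M = 0) :
    rowP A * M = 0 := by
  have h' : Mᴴ * (Aᴴ * A) = 0 := by
    have h2 := congrArg conjTranspose h
    simp only [conjTranspose_mul, conjTranspose_conjTranspose, conjTranspose_zero,
      Matrix.mul_assoc] at h2
    exact h2
  have h3 := congrArg conjTranspose (mul_rowP_zero h')
  simp only [conjTranspose_mul, conjTranspose_conjTranspose, conjTranspose_zero,
    rowP_conjT] at h3
  exact h3

lemma mul_rowP_self (A : Matrix (Fin n) (Fin n) ℝ) : A * rowP A = A := by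
  have e0 : Aᴴ * (A * rowP A) = Aᴴ * A := by rw [← Matrix.mul_assoc, rowP_fix]
  have key : (A * rowP A - A)ᴴ * (A * rowP A - A) = 0 := by
    rw [conjTranspose_sub, Matrix.sub_mul, Matrix.mul_sub, Matrix.mul_sub,
      conjTranspose_mul, rowP_conjT]
    simp only [Matrix.mul_assoc, e0, rowP_fix']
    simp
  have := Matrix.conjTranspose_mul_self_eq_zero.mp key
  rwa [sub_eq_zero] at this

lemma rowP_mul_self (A : Matrix (Fin n) (Fin n) ℝ) : rowP A * Aᴴ = Aᴴ := by
  have h := congrArg conjTranspose (mul_rowP_self A)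
  simp only [conjTranspose_mul, rowP_conjT] at h
  exact h

/-- 1 - P is PSD for a symmetric idempotent P -/
lemma psd_one_sub_proj {P : Matrix (Fin n) (Fin n) ℝ} (hs : Pᴴ = P) (hi : P * P = P) :
    (1 - P).PosSemidef := by
  have h : (1 - P)ᴴ * (1 - P) = 1 - P := by
    rw [conjTranspose_sub, conjTranspose_one, hs, Matrix.mul_sub, Matrix.sub_mul,
      Matrix.sub_mul, hi]
    simp
  have := Matrix.posSemidef_conjTranspose_mul_self (1 - P)
  rwa [h] at this


lemma psd_diag_nonneg {M : Matrix (Fin n) (Fin n) ℝ} (h : M.PosSemidef) (i : Fin n) :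
    0 ≤ M i i := by
  exact h.diag_nonneg

/-- master Cauchy–Schwarz bound for the trace against a contraction -/
lemma trace_le_sum_sqrt (M B V : Matrix (Fin n) (Fin n) ℝ) (μ : Fin n → ℝ)
    (hV : Vᴴ * V = 1) (hs : Mᴴ * M = V * diagonal μ * Vᴴ)
    (hB : (1 - Bᴴ * B).PosSemidef) :
    (Bᴴ * M).trace ≤ ∑ i, Real.sqrt (μ i) := by
  have hVV : V * Vᴴ = 1 := mul_eq_one_comm.mp hV
  have ht : (Bᴴ * M).trace = ((B * V)ᴴ * (M * V)).trace := by
    rw [conjTranspose_mul,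
      show Vᴴ * Bᴴ * (M * V) = Vᴴ * (Bᴴ * M) * V by simp only [Matrix.mul_assoc],
      Matrix.trace_mul_cycle, ← Matrix.mul_assoc, hVV, Matrix.one_mul]
  set F := B * V with hFdef
  set G := M * V with hGdef
  have hGG : Gᴴ * G = diagonal μ := by
    rw [hGdef, conjTranspose_mul,
      show Vᴴ * Mᴴ * (M * V) = Vᴴ * (Mᴴ * M) * V by simp only [Matrix.mul_assoc], hs,
      show Vᴴ * (V * diagonal μ * Vᴴ) * V = (Vᴴ * V) * diagonal μ * (Vᴴ * V) by
        simp only [Matrix.mul_assoc], hV, Matrix.one_mul, Matrix.mul_one]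
  have hG : ∀ i, (∑ j, (G j i) ^ 2) = μ i := by
    intro i
    have : (Gᴴ * G) i i = μ i := by rw [hGG]; simp
    rw [← this, Matrix.mul_apply]
    exact Finset.sum_congr rfl fun j _ => by
      rw [conjTranspose_apply, star_trivial, sq]
  have hF : ∀ i, (∑ j, (F j i) ^ 2) ≤ 1 := by
    intro i
    have hP : (Vᴴ * (1 - Bᴴ * B) * (Vᴴ)ᴴ).PosSemidef :=
      hB.mul_mul_conjTranspose_same Vᴴ
    have h0 : 0 ≤ (Vᴴ * (1 - Bᴴ * B) * (Vᴴ)ᴴ) i i := psd_diag_nonneg hP i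
    have he : Vᴴ * (1 - Bᴴ * B) * (Vᴴ)ᴴ = 1 - Fᴴ * F := by
      rw [conjTranspose_conjTranspose, Matrix.mul_sub, Matrix.mul_one, Matrix.sub_mul, hV,
        hFdef, conjTranspose_mul]
      simp only [Matrix.mul_assoc]
    rw [he] at h0
    have hFF : (Fᴴ * F) i i = ∑ j, (F j i) ^ 2 := by
      rw [Matrix.mul_apply]
      exact Finset.sum_congr rfl fun j _ => by
        rw [conjTranspose_apply, star_trivial, sq]
    have h1 : (1 : Matrix (Fin n) (Fin n) ℝ) i i = 1 := Matrix.one_apply_eq i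
    have := h0
    rw [Matrix.sub_apply, h1, hFF] at this
    linarith
  rw [ht, Matrix.trace]
  have hdiag : ∀ i, ((F)ᴴ * G).diag i = ∑ j, F j i * G j i := by
    intro i
    rw [Matrix.diag_apply, Matrix.mul_apply]
    exact Finset.sum_congr rfl fun j _ => by rw [conjTranspose_apply, star_trivial]
  calc ∑ i, ((F)ᴴ * G).diag i = ∑ i, ∑ j, F j i * G j i := by
        exact Finset.sum_congr rfl fun i _ => hdiag i
    _ ≤ ∑ i, Real.sqrt (μ i) := by
        apply Finset.sum_le_sum
        intro i _
        have cs : (∑ j, F j i * G j i) ^ 2 ≤ (∑ j, (F j i) ^ 2) * (∑ j, (G j i) ^ 2) :=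
          Finset.sum_mul_sq_le_sq_mul_sq _ _ _
        have h2 : (∑ j, F j i * G j i) ≤ Real.sqrt ((∑ j, (F j i) ^ 2) * (∑ j, (G j i) ^ 2)) := by
          calc (∑ j, F j i * G j i) ≤ |∑ j, F j i * G j i| := le_abs_self _
            _ = Real.sqrt ((∑ j, F j i * G j i) ^ 2) := (Real.sqrt_sq_eq_abs _).symm
            _ ≤ _ := Real.sqrt_le_sqrt cs
        have h3 : Real.sqrt ((∑ j, (F j i) ^ 2) * (∑ j, (G j i) ^ 2))
            = Real.sqrt (∑ j, (F j i) ^ 2) * Real.sqrt (∑ j, (G j i) ^ 2) := by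
          rw [Real.sqrt_mul (by positivity)]
        have h4 : Real.sqrt (∑ j, (F j i) ^ 2) ≤ 1 := Real.sqrt_le_one.mpr (hF i)
        have h5 : Real.sqrt (∑ j, (G j i) ^ 2) = Real.sqrt (μ i) := by rw [hG i]
        calc (∑ j, F j i * G j i) ≤ _ := h2
          _ = _ := h3
          _ ≤ 1 * Real.sqrt (μ i) := by
              rw [h5]; exact mul_le_mul_of_nonneg_right h4 (Real.sqrt_nonneg _)
          _ = Real.sqrt (μ i) := one_mul _

lemma eigenvalues_congr {N1 N2 : Matrix (Fin n) (Fin n) ℝ} (h1 : N1.IsHermitian)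
    (h2 : N2.IsHermitian) (e : N1 = N2) : h1.eigenvalues = h2.eigenvalues := by
  subst e; rfl

lemma sL_congr {X Y : Matrix (Fin n) (Fin n) ℝ} (h : Xᴴ * X = Yᴴ * Y) : sL X = sL Y :=
  eigenvalues_congr _ _ h

lemma trace_le_nuclear (M B : Matrix (Fin n) (Fin n) ℝ) (hB : (1 - Bᴴ * B).PosSemidef) :
    (Bᴴ * M).trace ≤ nuclearNorm M := by
  rw [nuclearNorm_eq]
  exact trace_le_sum_sqrt M B (sV M) (sL M) (sV_orth M) (sV_spec M) hB

lemma psd_one_sub_rowP (A : Matrix (Fin n) (Fin n) ℝ) : (1 - rowP A).PosSemidef :=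
  psd_one_sub_proj (rowP_conjT A) (rowP_idem A)

lemma psd_one_sub_dualW (A : Matrix (Fin n) (Fin n) ℝ) :
    (1 - (dualW A)ᴴ * dualW A).PosSemidef := by
  rw [dualW_sq]; exact psd_one_sub_rowP A

lemma nuclear_eq_dual_trace (A : Matrix (Fin n) (Fin n) ℝ) :
    ((dualW A)ᴴ * A).trace = nuclearNorm A := by
  rw [nuclearNorm_eq]; exact dualW_trace A

lemma nuclear_le_sum_sqrt (M V : Matrix (Fin n) (Fin n) ℝ) (μ : Fin n → ℝ)
    (hV : Vᴴ * V = 1) (hs : Mᴴ * M = V * diagonal μ * Vᴴ) :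
    nuclearNorm M ≤ ∑ i, Real.sqrt (μ i) := by
  rw [← nuclear_eq_dual_trace]
  exact trace_le_sum_sqrt M (dualW M) V μ hV hs (psd_one_sub_dualW M)

lemma nuclear_triangle (X Y : Matrix (Fin n) (Fin n) ℝ) :
    nuclearNorm (X + Y) ≤ nuclearNorm X + nuclearNorm Y := by
  rw [← nuclear_eq_dual_trace (X + Y), Matrix.mul_add, Matrix.trace_add]
  exact add_le_add (trace_le_nuclear X _ (psd_one_sub_dualW (X + Y)))
    (trace_le_nuclear Y _ (psd_one_sub_dualW (X + Y)))

lemma nuclear_neg (Y : Matrix (Fin n) (Fin n) ℝ) : nuclearNorm (-Y) = nuclearNorm Y := by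
  rw [nuclearNorm_eq, nuclearNorm_eq, sL_congr (X := -Y) (Y := Y) (by simp)]

lemma nuclear_rev (X Y : Matrix (Fin n) (Fin n) ℝ) :
    nuclearNorm X - nuclearNorm Y ≤ nuclearNorm (X + Y) := by
  have h := nuclear_triangle (X + Y) (-Y)
  rw [show X + Y + -Y = X by abel, nuclear_neg] at h
  linarith

lemma nuclear_add_of_orth {X Y : Matrix (Fin n) (Fin n) ℝ}
    (h1 : Xᴴ * Y = 0) (h2 : X * Yᴴ = 0) :
    nuclearNorm X + nuclearNorm Y ≤ nuclearNorm (X + Y) := by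
  have hYX : Yᴴ * X = 0 := by
    have h := congrArg conjTranspose h1
    simpa [conjTranspose_mul] using h
  have hXYt : Y * Xᴴ = 0 := by
    have h := congrArg conjTranspose h2
    simpa [conjTranspose_mul] using h
  have hcross1 : (dualW X)ᴴ * Y = 0 := by
    unfold dualW
    rw [conjTranspose_mul, sT_conjT, Matrix.mul_assoc, h1, Matrix.mul_zero]
  have hcross2 : (dualW Y)ᴴ * X = 0 := by
    unfold dualW
    rw [conjTranspose_mul, sT_conjT, Matrix.mul_assoc, hYX, Matrix.mul_zero]
  have hc1 : (dualW X)ᴴ * dualW Y = 0 := by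
    have e : (dualW X)ᴴ * dualW Y = ((dualW X)ᴴ * Y) * sT Y := by
      unfold dualW; simp only [Matrix.mul_assoc]
    rw [e, hcross1, Matrix.zero_mul]
  have hc2 : (dualW Y)ᴴ * dualW X = 0 := by
    have e : (dualW Y)ᴴ * dualW X = ((dualW Y)ᴴ * X) * sT X := by
      unfold dualW; simp only [Matrix.mul_assoc]
    rw [e, hcross2, Matrix.zero_mul]
  have hBB : (dualW X + dualW Y)ᴴ * (dualW X + dualW Y) = rowP X + rowP Y := by
    rw [conjTranspose_add, Matrix.add_mul, Matrix.mul_add, Matrix.mul_add, dualW_sq,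
      dualW_sq, hc1, hc2]
    simp
  have hYrX : Y * rowP X = 0 :=
    mul_rowP_zero (by rw [← Matrix.mul_assoc, hXYt, Matrix.zero_mul])
  have hrXYt : rowP X * Yᴴ = 0 := by
    have h := congrArg conjTranspose hYrX
    simp only [conjTranspose_mul, rowP_conjT, conjTranspose_zero] at h
    exact h
  have hPXY : rowP X * rowP Y = 0 :=
    mul_rowP_zero (by rw [← Matrix.mul_assoc, hrXYt, Matrix.zero_mul])
  have hPYX : rowP Y * rowP X = 0 := by
    have h := congrArg conjTranspose hPXY
    simp only [conjTranspose_mul, rowP_conjT, conjTranspose_zero] at h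
    exact h
  have hQ : (1 - (rowP X + rowP Y)).PosSemidef := by
    apply psd_one_sub_proj
    · rw [conjTranspose_add, rowP_conjT, rowP_conjT]
    · rw [Matrix.add_mul, Matrix.mul_add, Matrix.mul_add, rowP_idem, rowP_idem,
        hPXY, hPYX]
      simp
  have hmain := trace_le_nuclear (X + Y) (dualW X + dualW Y) (by rw [hBB]; exact hQ)
  have hval : ((dualW X + dualW Y)ᴴ * (X + Y)).trace
      = nuclearNorm X + nuclearNorm Y := by
    rw [conjTranspose_add, Matrix.add_mul, Matrix.mul_add, Matrix.mul_add,
      hcross1, hcross2]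
    simp only [Matrix.trace_add, add_zero, zero_add, Matrix.trace_zero]
    rw [nuclear_eq_dual_trace, nuclear_eq_dual_trace]
  rw [hval] at hmain
  exact hmain


lemma rank_add_le' (A B : Matrix (Fin n) (Fin n) ℝ) : (A + B).rank ≤ A.rank + B.rank := by
  have hle : LinearMap.range (A + B).mulVecLin
      ≤ LinearMap.range A.mulVecLin ⊔ LinearMap.range B.mulVecLin := by
    rintro x ⟨v, rfl⟩
    rw [Matrix.mulVecLin_add]
    exact Submodule.add_mem_sup (LinearMap.mem_range_self _ v) (LinearMap.mem_range_self _ v)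
  have h1 : (A + B).rank ≤ Module.finrank ℝ
      ↥(LinearMap.range A.mulVecLin ⊔ LinearMap.range B.mulVecLin) :=
    Submodule.finrank_mono hle
  have h2 := Submodule.finrank_sup_add_finrank_inf_eq
    (LinearMap.range A.mulVecLin) (LinearMap.range B.mulVecLin)
  have e0 : (A + B).rank = Module.finrank ℝ ↥(LinearMap.range (A + B).mulVecLin) := rfl
  have eA : A.rank = Module.finrank ℝ ↥(LinearMap.range A.mulVecLin) := rfl
  have eB : B.rank = Module.finrank ℝ ↥(LinearMap.range B.mulVecLin) := rfl
  omega

lemma rank_rowP_le (A : Matrix (Fin n) (Fin n) ℝ) : (rowP A).rank ≤ A.rank := by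
  rw [← dualW_sq]
  refine le_trans (Matrix.rank_mul_le_right _ _) ?_
  unfold dualW
  exact Matrix.rank_mul_le_left _ _

lemma WtW (A : Matrix (Fin n) (Fin n) ℝ) :
    (A * sV A)ᴴ * (A * sV A) = diagonal (sL A) := by
  rw [conjTranspose_mul,
    show (sV A)ᴴ * Aᴴ * (A * sV A) = (sV A)ᴴ * (Aᴴ * A) * sV A by simp only [Matrix.mul_assoc],
    sV_spec A,
    show (sV A)ᴴ * (sV A * diagonal (sL A) * (sV A)ᴴ) * sV A
      = ((sV A)ᴴ * sV A) * diagonal (sL A) * ((sV A)ᴴ * sV A) by simp only [Matrix.mul_assoc],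
    sV_orth, Matrix.one_mul, Matrix.mul_one]

lemma sandwichW (W V : Matrix (Fin n) (Fin n) ℝ) (lam a b : Fin n → ℝ)
    (hWW : Wᴴ * W = diagonal lam) :
    (W * diagonal a * Vᴴ)ᴴ * (W * diagonal b * Vᴴ)
      = V * diagonal (fun i => a i * (lam i * b i)) * Vᴴ := by
  have hdga : (diagonal a)ᴴ = diagonal a := by rw [conjT, diagonal_transpose]
  have hW2 : ∀ X : Matrix (Fin n) (Fin n) ℝ, Wᴴ * (W * X) = diagonal lam * X := by
    intro X; rw [← Matrix.mul_assoc, hWW]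
  rw [conjTranspose_mul, conjTranspose_mul, hdga, conjTranspose_conjTranspose]
  simp only [Matrix.mul_assoc]
  rw [hW2, ← Matrix.mul_assoc (diagonal lam) (diagonal b) Vᴴ, diagonal_mul_diagonal,
    ← Matrix.mul_assoc (diagonal a) _ Vᴴ, diagonal_mul_diagonal]

lemma card_filter_le (τ : Equiv.Perm (Fin n)) (k : ℕ) (c : Fin n → ℝ)
    (hc : ∀ i, c i ≠ 0 → n - k ≤ ((τ.symm i : Fin n) : ℕ)) :
    Fintype.card {i : Fin n // c i ≠ 0} ≤ k := by
  have hinj : Function.Injective (fun i : {i : Fin n // c i ≠ 0} =>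
      (⟨((τ.symm i.1 : Fin n) : ℕ) - (n - k), by
        have h1 := hc i.1 i.2
        have h2 : ((τ.symm i.1 : Fin n) : ℕ) < n := (τ.symm i.1).isLt
        omega⟩ : Fin k)) := by
    intro a b hab
    have h1a := hc a.1 a.2
    have h1b := hc b.1 b.2
    have hva : ((τ.symm a.1 : Fin n) : ℕ) < n := (τ.symm a.1).isLt
    have hvb : ((τ.symm b.1 : Fin n) : ℕ) < n := (τ.symm b.1).isLt
    have hval : ((τ.symm a.1 : Fin n) : ℕ) - (n - k) = ((τ.symm b.1 : Fin n) : ℕ) - (n - k) :=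
      congrArg Fin.val hab
    exact Subtype.ext (τ.symm.injective (Fin.ext (by omega)))
  simpa using Fintype.card_le_of_injective _ hinj


lemma key (k : ℕ) (Ls Δ Lk Lr : Matrix (Fin n) (Fin n) ℝ) (S : ℝ)
    (hLs : Lk + Lr = Ls) (hLrS : nuclearNorm Lr ≤ S) (hrank : Lk.rank ≤ k) :
    ∃ ΔA ΔB : Matrix (Fin n) (Fin n) ℝ,
      Δ = ΔA + ΔB ∧ ΔA.rank ≤ 2 * k ∧ ΔAᴴ * ΔB = 0 ∧ ΔBᴴ * ΔA = 0 ∧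
      nuclearNorm (Ls + Δ) ≥
        nuclearNorm Ls + nuclearNorm ΔB - nuclearNorm ΔA - 2 * S := by
  classical
  -- projections
  have hPUc : (rowP Lkᴴ)ᴴ = rowP Lkᴴ := rowP_conjT _
  have hPUi : rowP Lkᴴ * rowP Lkᴴ = rowP Lkᴴ := rowP_idem _
  have hRVc : (rowP Lk)ᴴ = rowP Lk := rowP_conjT _
  -- the correction matrix
  set Cm : Matrix (Fin n) (Fin n) ℝ := (1 - rowP Lkᴴ) * Δ * rowP Lk with hCmdef
  have hPCc : (rowP Cmᴴ)ᴴ = rowP Cmᴴ := rowP_conjT _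
  have hPCi : rowP Cmᴴ * rowP Cmᴴ = rowP Cmᴴ := rowP_idem _
  have hPU0 : rowP Lkᴴ * (1 - rowP Lkᴴ) = 0 := by
    rw [Matrix.mul_sub, Matrix.mul_one, hPUi, sub_self]
  have hPUCm : rowP Lkᴴ * Cm = 0 := by
    rw [hCmdef, show rowP Lkᴴ * ((1 - rowP Lkᴴ) * Δ * rowP Lk)
        = (rowP Lkᴴ * (1 - rowP Lkᴴ)) * (Δ * rowP Lk) by simp only [Matrix.mul_assoc],
      hPU0, Matrix.zero_mul]
  have hPUPC : rowP Lkᴴ * rowP Cmᴴ = 0 := by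
    apply mul_rowP_zero
    rw [conjTranspose_conjTranspose, ← Matrix.mul_assoc, hPUCm, Matrix.zero_mul]
  have hPCPU : rowP Cmᴴ * rowP Lkᴴ = 0 := by
    have h := congrArg conjTranspose hPUPC
    simp only [conjTranspose_mul, hPUc, hPCc, conjTranspose_zero] at h
    exact h
  -- the combined projection
  set P : Matrix (Fin n) (Fin n) ℝ := rowP Lkᴴ + rowP Cmᴴ with hPdef
  have hPc : Pᴴ = P := by rw [hPdef, conjTranspose_add, hPUc, hPCc]
  have hPi : P * P = P := by
    rw [hPdef, Matrix.add_mul, Matrix.mul_add, Matrix.mul_add, hPUi, hPCi, hPUPC, hPCPU]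
    simp
  have hPzero : P * (1 - P) = 0 := by
    rw [Matrix.mul_sub, Matrix.mul_one, hPi, sub_self]
  refine ⟨P * Δ, (1 - P) * Δ, ?_, ?_, ?_, ?_, ?_⟩
  · rw [← Matrix.add_mul]
    simp
  · -- rank
    have h1 : P * Δ = rowP Lkᴴ * Δ + rowP Cmᴴ * Δ := by rw [hPdef, Matrix.add_mul]
    have h2 : (rowP Lkᴴ * Δ).rank ≤ k := by
      refine le_trans (Matrix.rank_mul_le_left _ _) ?_
      refine le_trans (rank_rowP_le _) ?_
      rw [Matrix.rank_conjTranspose]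
      exact hrank
    have h3 : (rowP Cmᴴ * Δ).rank ≤ k := by
      refine le_trans (Matrix.rank_mul_le_left _ _) ?_
      refine le_trans (rank_rowP_le _) ?_
      rw [Matrix.rank_conjTranspose]
      refine le_trans (Matrix.rank_mul_le_right _ _) ?_
      exact le_trans (rank_rowP_le _) hrank
    rw [h1]
    calc (rowP Lkᴴ * Δ + rowP Cmᴴ * Δ).rank
        ≤ (rowP Lkᴴ * Δ).rank + (rowP Cmᴴ * Δ).rank := rank_add_le' _ _
      _ ≤ 2 * k := by omega
  · -- ΔAᴴ ΔB = 0
    rw [conjTranspose_mul, show Δᴴ * Pᴴ * ((1 - P) * Δ) = Δᴴ * (Pᴴ * (1 - P)) * Δ by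
      simp only [Matrix.mul_assoc], hPc, hPzero, Matrix.mul_zero, Matrix.zero_mul]
  · -- ΔBᴴ ΔA = 0
    have h0 : (P * Δ)ᴴ * ((1 - P) * Δ) = 0 := by
      rw [conjTranspose_mul, show Δᴴ * Pᴴ * ((1 - P) * Δ) = Δᴴ * (Pᴴ * (1 - P)) * Δ by
        simp only [Matrix.mul_assoc], hPc, hPzero, Matrix.mul_zero, Matrix.zero_mul]
    have h := congrArg conjTranspose h0
    simp only [conjTranspose_mul, conjTranspose_zero, conjTranspose_conjTranspose] at h
    rw [Matrix.mul_assoc] at h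
    rw [conjTranspose_mul, Matrix.mul_assoc]
    exact h
  · -- the nuclear norm bound
    -- Lkᴴ * ΔB = 0
    have hLkPU : Lkᴴ * rowP Lkᴴ = Lkᴴ := mul_rowP_self Lkᴴ
    have hLk1P : Lkᴴ * (1 - rowP Lkᴴ) = 0 := by
      rw [Matrix.mul_sub, Matrix.mul_one, hLkPU, sub_self]
    have hLkCm : Lkᴴ * Cm = 0 := by
      rw [hCmdef, show Lkᴴ * ((1 - rowP Lkᴴ) * Δ * rowP Lk)
          = (Lkᴴ * (1 - rowP Lkᴴ)) * (Δ * rowP Lk) by simp only [Matrix.mul_assoc],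
        hLk1P, Matrix.zero_mul]
    have hLkPC : Lkᴴ * rowP Cmᴴ = 0 := by
      apply mul_rowP_zero
      rw [conjTranspose_conjTranspose, ← Matrix.mul_assoc, hLkCm, Matrix.zero_mul]
    have horth1 : Lkᴴ * ((1 - P) * Δ) = 0 := by
      have : Lkᴴ * (1 - P) = 0 := by
        rw [hPdef, Matrix.mul_sub, Matrix.mul_one, Matrix.mul_add, hLkPU, hLkPC, add_zero,
          sub_self]
      rw [← Matrix.mul_assoc, this, Matrix.zero_mul]
    -- Lk * ΔBᴴ = 0
    have hfix : Lk * rowP Lk = Lk := mul_rowP_self Lk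
    have hRL : rowP Lk * Lkᴴ = Lkᴴ := rowP_mul_self Lk
    have h1PPU : (1 - P) * rowP Lkᴴ = 0 := by
      rw [hPdef, Matrix.sub_mul, Matrix.one_mul, Matrix.add_mul, hPUi, hPCPU, add_zero,
        sub_self]
    have hPCCm : rowP Cmᴴ * Cm = Cm := by
      have h := rowP_mul_self Cmᴴ
      rwa [conjTranspose_conjTranspose] at h
    have h1PCm : (1 - P) * Cm = 0 := by
      rw [hPdef, Matrix.sub_mul, Matrix.one_mul, Matrix.add_mul, hPUCm, hPCCm, zero_add,
        sub_self]
    have hCm2 : Cm = Δ * rowP Lk - rowP Lkᴴ * (Δ * rowP Lk) := by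
      rw [hCmdef, Matrix.sub_mul, Matrix.one_mul, Matrix.sub_mul, Matrix.mul_assoc]
    have hBRV : ((1 - P) * Δ) * rowP Lk = 0 := by
      have e : ((1 - P) * Δ) * rowP Lk
          = (1 - P) * (rowP Lkᴴ * (Δ * rowP Lk)) + (1 - P) * Cm := by
        rw [hCm2, Matrix.mul_sub, Matrix.mul_assoc]
        abel
      rw [e, ← Matrix.mul_assoc, h1PPU, Matrix.zero_mul, h1PCm, add_zero]
    have horth2 : Lk * ((1 - P) * Δ)ᴴ = 0 := by
      have hBL : ((1 - P) * Δ) * Lkᴴ = 0 := by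
        rw [← hRL, ← Matrix.mul_assoc, hBRV, Matrix.zero_mul]
      have h := congrArg conjTranspose hBL
      simp only [conjTranspose_mul, conjTranspose_zero, conjTranspose_conjTranspose] at h
      rw [conjTranspose_mul]
      exact h
    -- assemble
    have hΔ : Δ = P * Δ + (1 - P) * Δ := by
      rw [← Matrix.add_mul, add_sub_cancel, Matrix.one_mul]
    have hsplit : Ls + Δ = (Lk + (1 - P) * Δ) + (Lr + P * Δ) := by
      conv_lhs => rw [← hLs, hΔ]
      abel
    have h1 : nuclearNorm (Lk + (1 - P) * Δ) - nuclearNorm (Lr + P * Δ)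
        ≤ nuclearNorm (Ls + Δ) := by
      rw [hsplit]; exact nuclear_rev _ _
    have h2 : nuclearNorm Lk + nuclearNorm ((1 - P) * Δ)
        ≤ nuclearNorm (Lk + (1 - P) * Δ) := nuclear_add_of_orth horth1 horth2
    have h3 : nuclearNorm (Lr + P * Δ) ≤ nuclearNorm Lr + nuclearNorm (P * Δ) :=
      nuclear_triangle _ _
    have h4 : nuclearNorm Ls ≤ nuclearNorm Lk + nuclearNorm Lr := by
      rw [← hLs]; exact nuclear_triangle _ _
    linarith


def cfun (τ : Equiv.Perm (Fin n)) (k : ℕ) : Fin n → ℝ := fun i =>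
  if n - k ≤ ((τ.symm i : Fin n) : ℕ) then 1 else 0

def cfun' (τ : Equiv.Perm (Fin n)) (k : ℕ) : Fin n → ℝ := fun i =>
  if n - k ≤ ((τ.symm i : Fin n) : ℕ) then 0 else 1

/-- decomposition of `Δ` adapted to `L*` with rank ≤ 2k part and orthogonal part,
together with the nuclear-norm decomposability bound. -/
theorem stmt3 (n : ℕ) (Ls Δ : Matrix (Fin n) (Fin n) ℝ) (k : ℕ) (hk1 : 1 ≤ k) (hkn : k ≤ n) :
    ∃ ΔA ΔB : Matrix (Fin n) (Fin n) ℝ,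
      Δ = ΔA + ΔB ∧
      ΔA.rank ≤ 2 * k ∧ ΔAᵀ * ΔB = 0 ∧ ΔBᵀ * ΔA = 0 ∧
      nuclearNorm (Ls + Δ) ≥
        nuclearNorm Ls + nuclearNorm ΔB - nuclearNorm ΔA
          - 2 * ∑ j ∈ Finset.univ.filter (fun j : Fin n => k ≤ (j : ℕ)), svDesc Ls j := by
  classical
  have hVo : (sV Ls)ᴴ * sV Ls = 1 := sV_orth Ls
  have hVo2 : sV Ls * (sV Ls)ᴴ = 1 := sV_orth2 Ls
  set τ : Equiv.Perm (Fin n) := Tuple.sort (sL Ls) with hτ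
  have hsum1 : diagonal (cfun τ k) + diagonal (cfun' τ k) = 1 := by
    rw [diagonal_add]
    have he : (fun i => cfun τ k i + cfun' τ k i) = fun _ => (1 : ℝ) := by
      funext i
      unfold cfun cfun'
      by_cases h : n - k ≤ ((τ.symm i : Fin n) : ℕ) <;> simp [h]
    rw [he]
    rfl
  have hLs : (Ls * sV Ls) * diagonal (cfun τ k) * (sV Ls)ᴴ
      + (Ls * sV Ls) * diagonal (cfun' τ k) * (sV Ls)ᴴ = Ls := by
    rw [← Matrix.add_mul, ← Matrix.mul_add, hsum1, Matrix.mul_one, Matrix.mul_assoc, hVo2,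
      Matrix.mul_one]
  have hcsupp : ∀ i, cfun τ k i ≠ 0 → n - k ≤ ((τ.symm i : Fin n) : ℕ) := by
    intro i hi
    by_contra h
    exact hi (if_neg h)
  have hrank : ((Ls * sV Ls) * diagonal (cfun τ k) * (sV Ls)ᴴ).rank ≤ k := by
    refine le_trans (Matrix.rank_mul_le_left _ _) ?_
    refine le_trans (Matrix.rank_mul_le_right _ _) ?_
    rw [Matrix.rank_diagonal]
    exact card_filter_le τ k (cfun τ k) hcsupp
  have hLrd : ((Ls * sV Ls) * diagonal (cfun' τ k) * (sV Ls)ᴴ)ᴴ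
        * ((Ls * sV Ls) * diagonal (cfun' τ k) * (sV Ls)ᴴ)
      = sV Ls * diagonal (fun i => cfun' τ k i * (sL Ls i * cfun' τ k i)) * (sV Ls)ᴴ :=
    sandwichW _ _ _ _ _ (WtW Ls)
  have hLrS : nuclearNorm ((Ls * sV Ls) * diagonal (cfun' τ k) * (sV Ls)ᴴ)
      ≤ ∑ i, Real.sqrt (cfun' τ k i * (sL Ls i * cfun' τ k i)) :=
    nuclear_le_sum_sqrt _ _ _ hVo hLrd
  have hsum2 : ∑ i, Real.sqrt (cfun' τ k i * (sL Ls i * cfun' τ k i))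
      = ∑ j ∈ Finset.univ.filter (fun j : Fin n => k ≤ (j : ℕ)), svDesc Ls j := by
    rw [Finset.sum_filter]
    refine (Fintype.sum_equiv (Fin.revPerm.trans τ)
      (fun j => if k ≤ (j : ℕ) then svDesc Ls j else 0)
      (fun i => Real.sqrt (cfun' τ k i * (sL Ls i * cfun' τ k i))) ?_).symm
    intro j
    have hrev : ((Fin.rev j : Fin n) : ℕ) = n - (j.val + 1) := rfl
    have happ : (Fin.revPerm.trans τ) j = τ (Fin.rev j) := rfl
    have hsymm : τ.symm (τ (Fin.rev j)) = Fin.rev j := Equiv.symm_apply_apply _ _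
    have hsv : svDesc Ls j = Real.sqrt (sL Ls (τ (Fin.rev j))) := rfl
    have hjlt : (j : ℕ) < n := j.isLt
    rw [happ]
    show _ = Real.sqrt (cfun' τ k (τ (Fin.rev j)) * (sL Ls (τ (Fin.rev j)) * cfun' τ k (τ (Fin.rev j))))
    unfold cfun'
    rw [hsymm, hrev]
    show (if k ≤ (j : ℕ) then svDesc Ls j else 0) = _
    by_cases h : k ≤ (j : ℕ)
    · have hcond : ¬ (n - k ≤ n - ((j : ℕ) + 1)) := by omega
      rw [if_pos h, if_neg hcond, hsv]
      ring_nf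
    · have hcond : n - k ≤ n - ((j : ℕ) + 1) := by omega
      rw [if_neg h, if_pos hcond]
      simp
  obtain ⟨ΔA, ΔB, h1, h2, h3, h4, h5⟩ :=
    key k Ls Δ _ _ _ hLs (hLrS.trans (le_of_eq hsum2)) hrank
  exact ⟨ΔA, ΔB, h1, h2, by rw [← conjT]; exact h3, by rw [← conjT]; exact h4, h5⟩


end CitNet
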